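/- (Andreani–Martínez–Schuverdt) Let x* be a local minimizer of (NLP) with MFCQ holding at x*, and assume the rank of the Jacobian matrix J(x) ∈ ℝ^{(m+q)×n} is constant for all x in a neighborhood of x*, where q is the number of active inequality constraints at x*. Then there exists a Lagrange multiplier (λ,μ) ∈ Λ(x*) such that dᵀ∇²ₓₓL(x*,λ,μ)d ≥ 0 for all d ∈ S(x*) (WSOC holds at x*). -/

import Mathlib

open scoped BigOperators Pointwise
open Matrix

attribute [local instance] Classical.propDecidable

noncomputable section

/-- The gradient vector of `φ` at `x` (the vector of partial derivatives). -/
def gradVec {n : ℕ} (φ : (Fin n → ℝ) → ℝ) (x : Fin n → ℝ) : Fin n → ℝ :=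
  fun k => fderiv ℝ φ x (Pi.single k 1)

/-- The quadratic form `d ↦ dᵀ ∇²φ(x) d` of the Hessian of `φ` at `x`. -/
def hessQ {n : ℕ} (φ : (Fin n → ℝ) → ℝ) (x d : Fin n → ℝ) : ℝ :=
  iteratedFDeriv ℝ 2 φ x ![d, d]

/-- Feasibility for the problem (NLP). -/
def Feas {n m p : ℕ} (h : Fin m → (Fin n → ℝ) → ℝ) (g : Fin p → (Fin n → ℝ) → ℝ)
    (x : Fin n → ℝ) : Prop :=
  (∀ i, h i x = 0) ∧ ∀ j, g j x ≤ 0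

/-- The Lagrangian of (NLP). -/
def Lagr {n m p : ℕ} (f : (Fin n → ℝ) → ℝ) (h : Fin m → (Fin n → ℝ) → ℝ)
    (g : Fin p → (Fin n → ℝ) → ℝ) (lam : Fin m → ℝ) (mu : Fin p → ℝ) (x : Fin n → ℝ) : ℝ :=
  f x + ∑ i, lam i * h i x + ∑ j, mu j * g j x

/-- `(lam, mu)` is a Lagrange multiplier at `xs`, i.e. `(lam, mu) ∈ Λ(xs)`. -/
def IsLagMult {n m p : ℕ} (f : (Fin n → ℝ) → ℝ) (h : Fin m → (Fin n → ℝ) → ℝ)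
    (g : Fin p → (Fin n → ℝ) → ℝ) (xs : Fin n → ℝ) (lam : Fin m → ℝ) (mu : Fin p → ℝ) : Prop :=
  (∀ j, 0 ≤ mu j) ∧ fderiv ℝ (Lagr f h g lam mu) xs = 0 ∧ ∀ j, mu j * g j xs = 0

/-- The Mangasarian-Fromovitz constraint qualification at `xs`. -/
def MFCQ {n m p : ℕ} (h : Fin m → (Fin n → ℝ) → ℝ) (g : Fin p → (Fin n → ℝ) → ℝ)
    (xs : Fin n → ℝ) : Prop :=
  LinearIndependent ℝ (fun i : Fin m => fderiv ℝ (h i) xs) ∧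
  ∃ d : Fin n → ℝ, (∀ i, fderiv ℝ (h i) xs d = 0) ∧
    ∀ j, g j xs = 0 → fderiv ℝ (g j) xs d < 0

/-- Membership in the critical cone `C(xs)`. -/
def critCone {n m p : ℕ} (f : (Fin n → ℝ) → ℝ) (h : Fin m → (Fin n → ℝ) → ℝ)
    (g : Fin p → (Fin n → ℝ) → ℝ) (xs d : Fin n → ℝ) : Prop :=
  fderiv ℝ f xs d = 0 ∧ (∀ i, fderiv ℝ (h i) xs d = 0) ∧
    ∀ j, g j xs = 0 → fderiv ℝ (g j) xs d ≤ 0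

/-- Membership in the critical subspace `S(xs)`. -/
def critSub {n m p : ℕ} (h : Fin m → (Fin n → ℝ) → ℝ) (g : Fin p → (Fin n → ℝ) → ℝ)
    (xs d : Fin n → ℝ) : Prop :=
  (∀ i, fderiv ℝ (h i) xs d = 0) ∧ ∀ j, g j xs = 0 → fderiv ℝ (g j) xs d = 0

/-- The Jacobian matrix `J(x)` of equality and active inequality constraints
(activity taken at the base point `xs`). -/
def Jac {n m p : ℕ} (h : Fin m → (Fin n → ℝ) → ℝ) (g : Fin p → (Fin n → ℝ) → ℝ)
    (xs x : Fin n → ℝ) : Matrix (Fin m ⊕ {j : Fin p // g j xs = 0}) (Fin n) ℝ :=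
  Matrix.of fun i k =>
    Sum.elim (fun i' => fderiv ℝ (h i') x (Pi.single k 1))
      (fun j' => fderiv ℝ (g j'.1) x (Pi.single k 1)) i

/-- A first-order cone: the (direct) sum of a linear subspace and a ray. -/
def IsFirstOrderCone {n : ℕ} (K : Set (Fin n → ℝ)) : Prop :=
  ∃ (W : Submodule ℝ (Fin n → ℝ)) (d0 : Fin n → ℝ),
    K = {x | ∃ w ∈ W, ∃ r : ℝ, 0 ≤ r ∧ x = w + r • d0}

/-- The rank of a family of vectors: the dimension of its linear span. -/
def famRank {ι : Type*} {n : ℕ} (v : ι → (Fin n → ℝ)) : ℕ :=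
  Module.finrank ℝ (Submodule.span ℝ (Set.range v))

open Filter Set Submodule Module

-- ===================== auxiliary lemmas =====================

theorem clm_apply_eq_sum {κ : Type*} [Fintype κ] [DecidableEq κ]
    (φ : (κ → ℝ) →L[ℝ] ℝ) (v : κ → ℝ) :
    φ v = ∑ k, v k * φ (Pi.single k 1) := by
  have hv : v = ∑ k, v k • (Pi.single k 1 : κ → ℝ) := by
    ext j
    simp [Pi.single_apply]
  calc φ v = φ (∑ k, v k • (Pi.single k 1 : κ → ℝ)) := by rw [← hv]
    _ = ∑ k, v k * φ (Pi.single k 1) := by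
        rw [map_sum]; simp [smul_eq_mul]

theorem lm_apply_eq_sum {κ : Type*} [Fintype κ] [DecidableEq κ]
    (φ : (κ → ℝ) →ₗ[ℝ] ℝ) (v : κ → ℝ) :
    φ v = ∑ k, v k * φ (Pi.single k 1) := by
  have hv : v = ∑ k, v k • (Pi.single k 1 : κ → ℝ) := by
    ext j
    simp [Pi.single_apply]
  calc φ v = φ (∑ k, v k • (Pi.single k 1 : κ → ℝ)) := by rw [← hv]
    _ = ∑ k, v k * φ (Pi.single k 1) := by
        rw [map_sum]; simp [smul_eq_mul]

/-- The coordinate map from continuous linear functionals to vectors. -/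
def coordCLM (n : ℕ) : ((Fin n → ℝ) →L[ℝ] ℝ) →ₗ[ℝ] (Fin n → ℝ) where
  toFun φ := fun k => φ (Pi.single k 1)
  map_add' φ ψ := by ext k; simp
  map_smul' c φ := by ext k; simp

theorem coordCLM_apply {n : ℕ} (φ : (Fin n → ℝ) →L[ℝ] ℝ) (k : Fin n) :
    coordCLM n φ k = φ (Pi.single k 1) := rfl

theorem coordCLM_injective (n : ℕ) : Function.Injective (coordCLM n) := by
  intro φ ψ hfψ
  ext v
  rw [clm_apply_eq_sum φ v, clm_apply_eq_sum ψ v]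
  refine Finset.sum_congr rfl fun k _ => ?_
  rw [← coordCLM_apply φ, ← coordCLM_apply ψ, hfψ]

/-- Linearly independent functionals give a surjective map. -/
theorem surj_of_linearIndependent {n : ℕ} {κ : Type*} [Fintype κ]
    (φ : κ → ((Fin n → ℝ) →L[ℝ] ℝ)) (hLI : LinearIndependent ℝ φ) :
    Function.Surjective (fun v : Fin n → ℝ => (fun b => φ b v : κ → ℝ)) := by
  set T : (Fin n → ℝ) →ₗ[ℝ] (κ → ℝ) := LinearMap.pi (fun b => (φ b : (Fin n → ℝ) →ₗ[ℝ] ℝ)) with hT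
  suffices hs : Function.Surjective T by
    intro w; obtain ⟨v, hv⟩ := hs w; exact ⟨v, hv⟩
  rw [← LinearMap.range_eq_top]
  by_contra hne
  have hlt : LinearMap.range T < ⊤ := lt_top_iff_ne_top.2 hne
  obtain ⟨ff, hff0, hffbot⟩ :=
    Submodule.exists_dual_map_eq_bot_of_lt_top hlt inferInstance
  have hker : ∀ v, ff (T v) = 0 := by
    intro v
    have : ff (T v) ∈ Submodule.map ff (LinearMap.range T) :=
      Submodule.mem_map_of_mem (LinearMap.mem_range_self T v)
    rw [hffbot] at this
    simpa using this
  set α : κ → ℝ := fun b => ff (Pi.single b 1) with hα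
  have hcomb : ∀ v, ∑ b, α b * φ b v = 0 := by
    intro v
    have := hker v
    rw [lm_apply_eq_sum ff (T v)] at this
    simpa [hT, LinearMap.pi_apply, mul_comm, hα] using this
  have hz : ∀ b, α b = 0 := by
    have := Fintype.linearIndependent_iff.1 hLI α ?_
    · exact this
    · ext v
      simpa [mul_comm] using hcomb v
  apply hff0
  refine LinearMap.ext fun w => ?_
  rw [lm_apply_eq_sum ff w]
  have : ∀ b, ff (Pi.single b 1) = 0 := fun b => hz b
  simp [this]


/-- One-sided first-order condition. -/
theorem nonneg_deriv_of_right_min {φ : ℝ → ℝ} {L : ℝ}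
    (hf : HasDerivAt φ L 0) (h : ∀ᶠ t in nhdsWithin (0:ℝ) (Set.Ioi 0), φ 0 ≤ φ t) : 0 ≤ L := by
  have htend : Tendsto (slope φ 0) (nhdsWithin 0 {(0:ℝ)}ᶜ) (nhds L) :=
    hasDerivAt_iff_tendsto_slope.mp hf
  have hmono : nhdsWithin (0:ℝ) (Set.Ioi 0) ≤ nhdsWithin (0:ℝ) {(0:ℝ)}ᶜ :=
    nhdsWithin_mono 0 (fun x hx => by simp; exact ne_of_gt hx)
  refine ge_of_tendsto (htend.mono_left hmono) ?_
  filter_upwards [h, self_mem_nhdsWithin] with t ht ht0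
  rw [slope_def_field]
  have h1 : (0:ℝ) < t := ht0
  have h2 : 0 ≤ φ t - φ 0 := by linarith
  rw [sub_zero]
  positivity

/-- A function vanishing at `0` with negative derivative is eventually negative on the right. -/
theorem eventually_neg_of_deriv_neg {φ : ℝ → ℝ} {L : ℝ}
    (hf : HasDerivAt φ L 0) (hL : L < 0) (h0 : φ 0 = 0) :
    ∀ᶠ t in nhdsWithin (0:ℝ) (Set.Ioi 0), φ t < 0 := by
  have htend : Tendsto (slope φ 0) (nhdsWithin 0 {(0:ℝ)}ᶜ) (nhds L) :=
    hasDerivAt_iff_tendsto_slope.mp hf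
  have hmono : nhdsWithin (0:ℝ) (Set.Ioi 0) ≤ nhdsWithin (0:ℝ) {(0:ℝ)}ᶜ :=
    nhdsWithin_mono 0 (fun x hx => by simp; exact ne_of_gt hx)
  have hev : ∀ᶠ t in nhdsWithin (0:ℝ) (Set.Ioi 0), slope φ 0 t < 0 :=
    (htend.mono_left hmono).eventually_lt_const hL
  filter_upwards [hev, self_mem_nhdsWithin] with t ht ht0
  rw [slope_def_field, h0, sub_zero, sub_zero] at ht
  have h1 : (0:ℝ) < t := ht0
  rcases div_neg_iff.mp ht with ⟨_, h⟩ | ⟨h, _⟩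
  · linarith
  · exact h

/-- Second-order necessary condition in one dimension. -/
theorem second_deriv_test {φ : ℝ → ℝ} {K : ℝ} (hmin : IsLocalMin φ 0)
    (hd : ∀ᶠ t in nhds (0:ℝ), DifferentiableAt ℝ φ t) (h1 : deriv φ 0 = 0)
    (h2 : HasDerivAt (deriv φ) K 0) : 0 ≤ K := by
  by_contra hK
  push_neg at hK
  have htend : Tendsto (slope (deriv φ) 0) (nhdsWithin 0 {(0:ℝ)}ᶜ) (nhds K) :=
    hasDerivAt_iff_tendsto_slope.mp h2
  have hev : ∀ᶠ t in nhdsWithin (0:ℝ) {(0:ℝ)}ᶜ, slope (deriv φ) 0 t < 0 :=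
    htend.eventually_lt_const hK
  rw [eventually_nhdsWithin_iff] at hev
  have hall : ∀ᶠ t in nhds (0:ℝ),
      DifferentiableAt ℝ φ t ∧ φ 0 ≤ φ t ∧ (t ∈ ({(0:ℝ)}ᶜ : Set ℝ) → slope (deriv φ) 0 t < 0) :=
    hd.and ((show ∀ᶠ t in nhds (0:ℝ), φ 0 ≤ φ t from hmin).and hev)
  obtain ⟨ε, hε, hP⟩ := Metric.eventually_nhds_iff.mp hall
  set t0 := ε / 2 with ht0def
  have ht0pos : 0 < t0 := by positivity
  have ht0lt : ∀ t ∈ Icc 0 t0, dist t 0 < ε := by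
    intro t ht
    rw [Real.dist_eq, sub_zero, abs_of_nonneg ht.1]
    have := ht.2
    rw [ht0def] at this
    linarith
  have hanti : StrictAntiOn φ (Icc 0 t0) := by
    refine strictAntiOn_of_deriv_neg (convex_Icc 0 t0) ?_ ?_
    · intro t ht
      exact ((hP (ht0lt t ht)).1.continuousAt).continuousWithinAt
    · intro t ht
      rw [interior_Icc] at ht
      have htd : dist t 0 < ε := ht0lt t ⟨le_of_lt ht.1, le_of_lt ht.2⟩
      have hslope := (hP htd).2.2 (by simp; exact ne_of_gt ht.1)
      rw [slope_def_field, h1, sub_zero, sub_zero] at hslope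
      rcases div_neg_iff.mp hslope with ⟨_, h⟩ | ⟨h, _⟩
      · linarith [ht.1]
      · exact h
  have hlt : φ t0 < φ 0 :=
    hanti (left_mem_Icc.2 (le_of_lt ht0pos)) (right_mem_Icc.2 (le_of_lt ht0pos)) ht0pos
  have hge : φ 0 ≤ φ t0 := (hP (ht0lt t0 (right_mem_Icc.2 (le_of_lt ht0pos)))).2.1
  linarith

/-- Conservation lemma: a function whose gradient lies pointwise in the span of the
gradients of conserved quantities is itself conserved along the curve. -/
theorem conserve_lemma {n : ℕ} {κ : Type*} [Fintype κ]
    {F : κ → (Fin n → ℝ) → ℝ} (hF : ∀ b, ContDiff ℝ 2 (F b))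
    {c : (Fin n → ℝ) → ℝ} (hc : ContDiff ℝ 2 c)
    {γ : ℝ → (Fin n → ℝ)} {xs : Fin n → ℝ}
    (hγc : ContDiffAt ℝ 2 γ 0) (hγ0 : γ 0 = xs)
    (hev : ∀ᶠ t in nhds (0:ℝ), ∀ b, F b (γ t) = F b xs)
    (hspan : ∀ᶠ x in nhds xs,
      gradVec c x ∈ Submodule.span ℝ (Set.range fun b => gradVec (F b) x)) :
    ∀ᶠ t in nhds (0:ℝ), c (γ t) = c xs := by
  have hγdiff_ev : ∀ᶠ t in nhds (0:ℝ), DifferentiableAt ℝ γ t :=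
    (hγc.eventually (by norm_num)).mono (fun t ht => ht.differentiableAt two_ne_zero)
  have hγtend : Tendsto γ (nhds 0) (nhds xs) := by
    rw [← hγ0]; exact hγc.continuousAt.tendsto
  have hmem : ∀ᶠ t in nhds (0:ℝ),
      gradVec c (γ t) ∈ Submodule.span ℝ (Set.range fun b => gradVec (F b) (γ t)) :=
    hγtend.eventually hspan
  obtain ⟨ε, hε, hP⟩ := Metric.eventually_nhds_iff.mp ((hγdiff_ev.and hev).and hmem)
  -- the derivative of c ∘ γ vanishes on `(-ε, ε)`
  have key : ∀ t : ℝ, dist t 0 < ε → HasDerivAt (fun u => c (γ u)) 0 t := by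
    intro t htd
    obtain ⟨⟨hdiff, -⟩, hsp⟩ := hP htd
    have hγt : HasDerivAt γ (deriv γ t) t := hdiff.hasDerivAt
    set v := deriv γ t with hvdef
    have hb : ∀ b, fderiv ℝ (F b) (γ t) v = 0 := by
      intro b
      have hcst : (fun u => F b (γ u)) =ᶠ[nhds t] (fun _ => F b xs) := by
        have hball : Metric.ball (0:ℝ) ε ∈ nhds t := by
          refine Metric.isOpen_ball.mem_nhds ?_
          simpa [Metric.mem_ball] using htd
        filter_upwards [hball] with u hu
        exact ((hP (by simpa [Metric.mem_ball] using hu)).1.2) b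
      have hconst : HasDerivAt (fun u => F b (γ u)) 0 t :=
        hcst.hasDerivAt_iff.mpr (hasDerivAt_const t (F b xs))
      have hchain : HasDerivAt (fun u => F b (γ u)) (fderiv ℝ (F b) (γ t) v) t :=
        (((hF b).differentiable two_ne_zero (γ t)).hasFDerivAt).comp_hasDerivAt t hγt
      exact hchain.unique hconst
    -- evaluation functional
    set ev : (Fin n → ℝ) →ₗ[ℝ] ℝ :=
      { toFun := fun w => ∑ k, v k * w k
        map_add' := by intro a b; simp [mul_add, Finset.sum_add_distrib]
        map_smul' := by
          intro r a
          simp only [Pi.smul_apply, smul_eq_mul, RingHom.id_apply, Finset.mul_sum]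
          exact Finset.sum_congr rfl fun k _ => by ring } with hevdef
    have hevgrad : ∀ (ψ : (Fin n → ℝ) → ℝ) (x : Fin n → ℝ),
        ev (gradVec ψ x) = fderiv ℝ ψ x v := by
      intro ψ x
      rw [clm_apply_eq_sum (fderiv ℝ ψ x) v]
      rfl
    have hker : Submodule.span ℝ (Set.range fun b => gradVec (F b) (γ t)) ≤ LinearMap.ker ev := by
      rw [Submodule.span_le]
      rintro w ⟨b, rfl⟩
      rw [SetLike.mem_coe, LinearMap.mem_ker, hevgrad]
      exact hb b
    have hcv : fderiv ℝ c (γ t) v = 0 := by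
      rw [← hevgrad c (γ t)]
      exact LinearMap.mem_ker.mp (hker hsp)
    have hchain : HasDerivAt (fun u => c (γ u)) (fderiv ℝ c (γ t) v) t :=
      ((hc.differentiable two_ne_zero (γ t)).hasFDerivAt).comp_hasDerivAt t hγt
    rwa [hcv] at hchain
  refine Metric.eventually_nhds_iff.mpr ⟨ε, hε, fun t htd => ?_⟩
  rw [Real.dist_eq, sub_zero] at htd
  rcases le_or_gt 0 t with hcase | hcase
  · have hconst := constant_of_has_deriv_right_zero (f := fun u => c (γ u)) (a := 0) (b := t)
      (fun u hu => by
        refine ((key u ?_).differentiableAt.continuousAt).continuousWithinAt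
        rw [Real.dist_eq, sub_zero]
        calc |u| = u := abs_of_nonneg hu.1
          _ ≤ t := hu.2
          _ ≤ |t| := le_abs_self t
          _ < ε := htd)
      (fun u hu => (key u (by
        rw [Real.dist_eq, sub_zero]
        calc |u| = u := abs_of_nonneg hu.1
          _ ≤ t := le_of_lt hu.2
          _ ≤ |t| := le_abs_self t
          _ < ε := htd)).hasDerivWithinAt)
    have h2 : c (γ t) = c (γ 0) := hconst t (right_mem_Icc.2 hcase)
    rwa [hγ0] at h2
  · have habs : ∀ u ∈ Icc t 0, dist u 0 < ε := by
      intro u hu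
      rw [Real.dist_eq, sub_zero]
      calc |u| ≤ -t := abs_le.2 ⟨by linarith [hu.1], by linarith [hu.2]⟩
        _ = |t| := (abs_of_neg hcase).symm
        _ < ε := htd
    have hconst := constant_of_has_deriv_right_zero (f := fun u => c (γ u)) (a := t) (b := 0)
      (fun u hu => ((key u (habs u hu)).differentiableAt.continuousAt).continuousWithinAt)
      (fun u hu => (key u (habs u ⟨hu.1, le_of_lt hu.2⟩)).hasDerivWithinAt)
    have h2 : c (γ 0) = c (γ t) := hconst 0 (right_mem_Icc.2 (le_of_lt hcase))
    rw [hγ0] at h2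
    exact h2.symm

/-- Farkas' lemma, algebraic form, by induction on the number of generators. -/
theorem farkas_fin {V : Type*} [AddCommGroup V] [Module ℝ V] :
    ∀ (k : ℕ) (w : Fin k → Module.Dual ℝ V) (f : Module.Dual ℝ V),
      (∀ v, (∀ j, 0 ≤ w j v) → 0 ≤ f v) →
      ∃ μ : Fin k → ℝ, (∀ j, 0 ≤ μ j) ∧ f = ∑ j, μ j • w j := by
  intro k
  induction k with
  | zero =>
    intro w f hf
    refine ⟨fun _ => 0, fun j => le_rfl, ?_⟩
    have h1 : ∀ v, f v = 0 := by
      intro v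
      have h2 : 0 ≤ f v := hf v (fun j => j.elim0)
      have h3 : 0 ≤ f (-v) := hf (-v) (fun j => j.elim0)
      rw [map_neg] at h3
      linarith
    refine LinearMap.ext fun v => ?_
    simp [h1 v]
  | succ k IH =>
    intro w f hf
    set w' : Fin k → Module.Dual ℝ V := fun j => w j.castSucc with hw'
    set wk : Module.Dual ℝ V := w (Fin.last k) with hwk
    by_cases hcase : ∀ v, (∀ j, 0 ≤ w' j v) → 0 ≤ f v
    · obtain ⟨μ', hμ'0, hμ'⟩ := IH w' f hcase
      refine ⟨Fin.snoc μ' 0, ?_, ?_⟩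
      · intro j
        refine Fin.lastCases ?_ (fun i => ?_) j
        · simp
        · simpa using hμ'0 i
      · rw [Fin.sum_univ_castSucc]
        simp only [Fin.snoc_castSucc, Fin.snoc_last, zero_smul, add_zero]
        exact hμ'
    · push_neg at hcase
      obtain ⟨vb, hvb, hfvb⟩ := hcase
      have hwkvb : wk vb < 0 := by
        by_contra hcon
        push_neg at hcon
        have : 0 ≤ f vb := by
          refine hf vb fun j => ?_
          refine Fin.lastCases ?_ (fun i => ?_) j
          · exact hcon
          · exact hvb i
        linarith
      have hc0 : wk vb ≠ 0 := ne_of_lt hwkvb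
      set w'' : Fin k → Module.Dual ℝ V := fun j => w' j - (w' j vb / wk vb) • wk with hw''
      set f'' : Module.Dual ℝ V := f - (f vb / wk vb) • wk with hf''
      have hw''app : ∀ (j : Fin k) (v : V), w'' j v = w' j v - w' j vb / wk vb * wk v := by
        intro j v; simp [hw'']
      have hf''app : ∀ v : V, f'' v = f v - f vb / wk vb * wk v := by
        intro v; simp [hf'']
      have hcond : ∀ v, (∀ j, 0 ≤ w'' j v) → 0 ≤ f'' v := by
        intro v hv
        set v' := v - (wk v / wk vb) • vb with hv'
        have hlast : wk v' = 0 := by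
          rw [hv', map_sub, _root_.map_smul, smul_eq_mul]
          field_simp
          ring
        have hcast : ∀ j : Fin k, w' j v' = w'' j v := by
          intro j
          rw [hv', map_sub, _root_.map_smul, smul_eq_mul, hw''app]
          ring
        have hge : 0 ≤ f v' := by
          refine hf v' fun j => ?_
          refine Fin.lastCases ?_ (fun i => ?_) j
          · show 0 ≤ w (Fin.last k) v'
            rw [← hwk, hlast]
          · show 0 ≤ w i.castSucc v'
            rw [← hw'] at *
            rw [hcast i]; exact hv i
        have hfv' : f v' = f'' v := by
          rw [hv', map_sub, _root_.map_smul, smul_eq_mul, hf''app]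
          ring
        linarith [hfv' ▸ hge]
      obtain ⟨μ'', hμ''0, hμ''⟩ := IH w'' f'' hcond
      set μl : ℝ := (f vb - ∑ j, μ'' j * w' j vb) / wk vb with hμl
      have hμl0 : 0 ≤ μl := by
        have hs : 0 ≤ ∑ j, μ'' j * w' j vb :=
          Finset.sum_nonneg fun j _ => mul_nonneg (hμ''0 j) (hvb j)
        have hnum : f vb - ∑ j, μ'' j * w' j vb < 0 := by linarith
        exact le_of_lt (div_pos_of_neg_of_neg hnum hwkvb)
      refine ⟨Fin.snoc μ'' μl, ?_, ?_⟩
      · intro j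
        refine Fin.lastCases ?_ (fun i => ?_) j
        · simpa using hμl0
        · simpa using hμ''0 i
      · refine LinearMap.ext fun v => ?_
        have key : f'' v = ∑ j, μ'' j * w'' j v := by
          rw [hμ'']
          simp
        rw [hf''app] at key
        have expand : ∑ j, μ'' j * w'' j v
            = (∑ j, μ'' j * w' j v) - (∑ j, μ'' j * w' j vb) * wk v / wk vb := by
          rw [Finset.sum_mul, Finset.sum_div, ← Finset.sum_sub_distrib]
          refine Finset.sum_congr rfl fun j _ => ?_
          rw [hw''app]
          ring
        rw [expand] at key
        show f v = (∑ j : Fin (k+1), (Fin.snoc μ'' μl : Fin (k+1) → ℝ) j • w j) v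
        rw [Fin.sum_univ_castSucc]
        simp only [LinearMap.add_apply, LinearMap.smul_apply, Fin.snoc_castSucc, Fin.snoc_last,
          smul_eq_mul, LinearMap.coe_sum, Finset.sum_apply]
        show f v = (∑ x : Fin k, μ'' x * (w' x) v) + μl * wk v
        rw [hμl]
        field_simp at key ⊢
        linarith [key]
  
theorem farkas' {V : Type*} [AddCommGroup V] [Module ℝ V] {ι : Type*} [Fintype ι]
    (w : ι → Module.Dual ℝ V) (f : Module.Dual ℝ V)
    (hf : ∀ v, (∀ j, 0 ≤ w j v) → 0 ≤ f v) :
    ∃ μ : ι → ℝ, (∀ j, 0 ≤ μ j) ∧ f = ∑ j, μ j • w j := by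
  classical
  set e := Fintype.equivFin ι with hedef
  obtain ⟨μ, hμ0, hμ⟩ := farkas_fin (Fintype.card ι) (fun j => w (e.symm j)) f
    (fun v hv => hf v (fun i => by simpa using hv (e i)))
  refine ⟨fun i => μ (e i), fun i => hμ0 _, ?_⟩
  rw [hμ, ← Equiv.sum_comp e (fun j => μ j • w (e.symm j))]
  simp

/-- Curve lemma: a C² curve through `xs` with velocity `d`, staying in the joint level
set of a family of C² functions with linearly independent derivatives at `xs`. -/
theorem curve_lemma {n : ℕ} {κ : Type*} [Fintype κ]
    (F : κ → (Fin n → ℝ) → ℝ) (hF : ∀ b, ContDiff ℝ 2 (F b))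
    (xs d : Fin n → ℝ)
    (hLI : LinearIndependent ℝ (fun b => fderiv ℝ (F b) xs))
    (hd : ∀ b, fderiv ℝ (F b) xs d = 0) :
    ∃ γ : ℝ → (Fin n → ℝ), ContDiffAt ℝ 2 γ 0 ∧ γ 0 = xs ∧ HasDerivAt γ d 0 ∧
      ∀ᶠ t in nhds (0:ℝ), ∀ b, F b (γ t) = F b xs := by
  classical
  set Ftot : (Fin n → ℝ) → (κ → ℝ) := fun x b => F b x with hFtotdef
  have hFtot : ContDiff ℝ 2 Ftot := contDiff_pi.2 hF
  have hFdiff : ∀ b, Differentiable ℝ (F b) := fun b => (hF b).differentiable two_ne_zero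
  have hFtotdiff : Differentiable ℝ Ftot := hFtot.differentiable two_ne_zero
  set Φ : (Fin n → ℝ) →L[ℝ] (κ → ℝ) := fderiv ℝ Ftot xs with hΦdef
  have hΦpi : Φ = ContinuousLinearMap.pi (fun b => fderiv ℝ (F b) xs) := by
    rw [hΦdef, hFtotdef]
    exact fderiv_pi (fun b => (hFdiff b).differentiableAt)
  have hΦapp : ∀ v b, Φ v b = fderiv ℝ (F b) xs v := by
    intro v b; rw [hΦpi]; rfl
  have hsurj : Function.Surjective Φ := by
    have hcoe : ⇑Φ = fun v => (fun b => fderiv ℝ (F b) xs v : κ → ℝ) :=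
      funext fun v => funext fun b => hΦapp v b
    rw [hcoe]
    exact surj_of_linearIndependent _ hLI
  obtain ⟨Aₗ, hA⟩ := (Φ : (Fin n → ℝ) →ₗ[ℝ] (κ → ℝ)).exists_rightInverse_of_surjective
    (LinearMap.range_eq_top.2 hsurj)
  set A : (κ → ℝ) →L[ℝ] (Fin n → ℝ) := LinearMap.toContinuousLinearMap Aₗ with hAdef
  have hAapp : ∀ u, Φ (A u) = u := fun u => LinearMap.congr_fun hA u
  set θ : ℝ × (κ → ℝ) → (Fin n → ℝ) := fun z => xs + z.1 • d + A z.2 with hθdef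
  have hθc : ContDiff ℝ 2 θ :=
    (contDiff_const.add (contDiff_fst.smul contDiff_const)).add (A.contDiff.comp contDiff_snd)
  set G : ℝ × (κ → ℝ) → ℝ × (κ → ℝ) := fun z => (z.1, Ftot (θ z) - Ftot xs) with hGdef
  have hGc : ContDiff ℝ 2 G :=
    contDiff_fst.prodMk ((hFtot.comp hθc).sub contDiff_const)
  have hθ0 : θ 0 = xs := by simp [hθdef]
  -- derivative of θ at 0
  set Mθ : (ℝ × (κ → ℝ)) →L[ℝ] (Fin n → ℝ) :=
    (ContinuousLinearMap.fst ℝ ℝ (κ → ℝ)).smulRight d +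
      A.comp (ContinuousLinearMap.snd ℝ ℝ (κ → ℝ)) with hMθdef
  have hθd : HasFDerivAt θ Mθ 0 := by
    have h1 : HasFDerivAt (fun z : ℝ × (κ → ℝ) => z.1 • d)
        ((ContinuousLinearMap.fst ℝ ℝ (κ → ℝ)).smulRight d) 0 :=
      (hasFDerivAt_fst (p := (0 : ℝ × (κ → ℝ)))).smul_const d
    have h2 : HasFDerivAt (fun z : ℝ × (κ → ℝ) => A z.2)
        (A.comp (ContinuousLinearMap.snd ℝ ℝ (κ → ℝ))) 0 :=
      A.hasFDerivAt.comp 0 (hasFDerivAt_snd (p := (0 : ℝ × (κ → ℝ))))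
    simpa [hθdef, hMθdef] using ((hasFDerivAt_const xs (0 : ℝ × (κ → ℝ))).add h1).add h2
  have hFθ : HasFDerivAt (fun z => Ftot (θ z)) (Φ.comp Mθ) 0 := by
    have : HasFDerivAt Ftot Φ (θ 0) := by rw [hθ0]; exact (hFtotdiff xs).hasFDerivAt
    exact this.comp 0 hθd
  have hGderiv : HasFDerivAt G
      ((ContinuousLinearMap.fst ℝ ℝ (κ → ℝ)).prod (Φ.comp Mθ)) 0 := by
    exact (hasFDerivAt_fst (p := (0 : ℝ × (κ → ℝ)))).prodMk (hFθ.sub_const (Ftot xs))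
  have hΦd : Φ d = 0 := funext fun b => by rw [hΦapp]; exact hd b
  have hGd_eq : ((ContinuousLinearMap.fst ℝ ℝ (κ → ℝ)).prod (Φ.comp Mθ))
      = ((ContinuousLinearEquiv.refl ℝ (ℝ × (κ → ℝ))) :
          (ℝ × (κ → ℝ)) →L[ℝ] (ℝ × (κ → ℝ))) := by
    refine ContinuousLinearMap.ext fun z => ?_
    refine Prod.ext ?_ ?_
    · simp
    · show Φ (Mθ z) = z.2
      rw [hMθdef]
      simp only [ContinuousLinearMap.add_apply, ContinuousLinearMap.smulRight_apply,
        ContinuousLinearMap.coe_fst', ContinuousLinearMap.coe_comp', Function.comp_apply,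
        ContinuousLinearMap.coe_snd', map_add, _root_.map_smul]
      rw [hΦd, hAapp]
      simp
  have hGdAt : HasFDerivAt G
      (((ContinuousLinearEquiv.refl ℝ (ℝ × (κ → ℝ))) :
        (ℝ × (κ → ℝ)) →L[ℝ] (ℝ × (κ → ℝ)))) 0 := hGd_eq ▸ hGderiv
  have hn : (2 : WithTop ℕ∞) ≠ 0 := two_ne_zero
  have hG20 : ContDiffAt ℝ 2 G 0 := hGc.contDiffAt
  set Ψ : ℝ × (κ → ℝ) → ℝ × (κ → ℝ) := hG20.localInverse hGdAt hn with hΨdef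
  have hstrict : HasStrictFDerivAt G
      (((ContinuousLinearEquiv.refl ℝ (ℝ × (κ → ℝ))) :
        (ℝ × (κ → ℝ)) →L[ℝ] (ℝ × (κ → ℝ)))) 0 := hG20.hasStrictFDerivAt' hGdAt hn
  have hΨeq : Ψ = hstrict.localInverse G _ 0 := rfl
  have hG0 : G 0 = 0 := by
    have : θ 0 = xs := hθ0
    simp [hGdef, this]
  have hΨcd : ContDiffAt ℝ 2 Ψ 0 := by
    have := hG20.to_localInverse hGdAt hn
    rwa [hG0] at this
  have hΨ0 : Ψ 0 = 0 := by
    have := hG20.localInverse_apply_image hGdAt hn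
    rwa [hG0] at this
  have hΨfd : HasFDerivAt Ψ
      (((ContinuousLinearEquiv.refl ℝ (ℝ × (κ → ℝ))).symm :
        (ℝ × (κ → ℝ)) →L[ℝ] (ℝ × (κ → ℝ)))) 0 := by
    have := hstrict.to_localInverse.hasFDerivAt
    rw [← hΨeq, hG0] at this
    exact this
  have hrinv : ∀ᶠ y in nhds (0 : ℝ × (κ → ℝ)), G (Ψ y) = y := by
    have := hstrict.eventually_right_inverse
    rw [← hΨeq, hG0] at this
    exact this
  set τ : ℝ → ℝ × (κ → ℝ) := fun t => (t, 0) with hτdef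
  have hτc : ContDiff ℝ 2 τ := contDiff_id.prodMk contDiff_const
  have hτ0 : τ 0 = 0 := by simp [hτdef]
  set γ : ℝ → (Fin n → ℝ) := fun t => xs + t • d + A ((Ψ (τ t)).2) with hγdef
  have hΨτ : ContDiffAt ℝ 2 (fun t => Ψ (τ t)) 0 := by
    refine ContDiffAt.comp 0 ?_ hτc.contDiffAt
    rw [hτ0]; exact hΨcd
  have hγc : ContDiffAt ℝ 2 γ 0 := by
    refine ContDiffAt.add (ContDiffAt.add contDiffAt_const ?_) ?_
    · exact (contDiff_id.smul contDiff_const).contDiffAt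
    · exact (A.contDiff.comp contDiff_snd).contDiffAt.comp 0 hΨτ
  have hγ0 : γ 0 = xs := by
    rw [hγdef]
    simp only [hτ0, hΨ0]
    simp
  have hτd : HasDerivAt τ ((1 : ℝ), (0 : κ → ℝ)) 0 :=
    (hasDerivAt_id (0:ℝ)).prodMk (hasDerivAt_const (0:ℝ) (0:κ → ℝ))
  have hΨτd : HasDerivAt (fun t => Ψ (τ t)) ((1 : ℝ), (0 : κ → ℝ)) 0 := by
    have hΨfd' : HasFDerivAt Ψ
        (((ContinuousLinearEquiv.refl ℝ (ℝ × (κ → ℝ))).symm :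
          (ℝ × (κ → ℝ)) →L[ℝ] (ℝ × (κ → ℝ)))) (τ 0) := by rw [hτ0]; exact hΨfd
    have h := hΨfd'.comp_hasDerivAt 0 hτd
    simpa [Function.comp_def] using h
  have hsnd : HasDerivAt (fun t => (Ψ (τ t)).2) (0 : κ → ℝ) 0 := by
    have h := (ContinuousLinearMap.snd ℝ ℝ (κ → ℝ)).hasFDerivAt.comp_hasDerivAt 0 hΨτd
    simpa [Function.comp_def] using h
  have hγd : HasDerivAt γ d 0 := by
    have hA' : HasDerivAt (fun t => A ((Ψ (τ t)).2)) (A 0) 0 :=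
      A.hasFDerivAt.comp_hasDerivAt 0 hsnd
    have hlin : HasDerivAt (fun t : ℝ => t • d) ((1 : ℝ) • d) 0 := (hasDerivAt_id (0:ℝ)).smul_const d
    have := ((hasDerivAt_const (0:ℝ) xs).add hlin).add hA'
    rw [hγdef]
    exact this.congr_deriv (by simp)
  refine ⟨γ, hγc, hγ0, hγd, ?_⟩
  have hτtend : Filter.Tendsto τ (nhds 0) (nhds (0 : ℝ × (κ → ℝ))) := by
    rw [← hτ0]; exact hτc.continuous.tendsto 0
  filter_upwards [hτtend.eventually hrinv] with t ht
  intro b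
  have h1 : (Ψ (τ t)).1 = t := congrArg Prod.fst ht
  have h2 : Ftot (θ (Ψ (τ t))) - Ftot xs = 0 := by
    have := congrArg Prod.snd ht
    simpa [hGdef, hτdef] using this
  have h3 : θ (Ψ (τ t)) = γ t := by
    rw [hθdef, hγdef]
    simp only [h1]
  rw [h3] at h2
  have h4 : Ftot (γ t) = Ftot xs := by
    have := sub_eq_zero.mp h2
    exact this
  exact congrFun h4 b

/-- Selection of an index set of rows that form a local pointwise spanning family. -/
theorem basis_rows {n : ℕ} {ι : Type} [Fintype ι]
    (c : ι → (Fin n → ℝ) → ℝ) (hc : ∀ i, ContDiff ℝ 2 (c i)) (xs : Fin n → ℝ)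
    (hconst : ∀ᶠ x in nhds xs,
      finrank ℝ (span ℝ (Set.range fun i => gradVec (c i) x))
        = finrank ℝ (span ℝ (Set.range fun i => gradVec (c i) xs))) :
    ∃ (κ : Type) (_ : Fintype κ) (σ : κ → ι),
      LinearIndependent ℝ (fun b : κ => gradVec (c (σ b)) xs) ∧
      ∀ᶠ x in nhds xs, ∀ i,
        gradVec (c i) x ∈ span ℝ (Set.range fun b : κ => gradVec (c (σ b)) x) := by
  classical
  set V : (Fin n → ℝ) → ι → (Fin n → ℝ) := fun x i => gradVec (c i) x with hVdef
  obtain ⟨b, hbsub, hbspan, hbLI⟩ := exists_linearIndependent ℝ (Set.range (V xs))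
  have hbfin : b.Finite := hbLI.setFinite
  haveI : Fintype b := hbfin.fintype
  set σ : b → ι := fun v => (hbsub v.2).choose with hσdef
  have hσ : ∀ v : b, V xs (σ v) = (v : Fin n → ℝ) := fun v => (hbsub v.2).choose_spec
  have hWxs : (fun v : b => V xs (σ v)) = (fun v : b => (v : Fin n → ℝ)) :=
    funext fun v => hσ v
  have hLIxs : LinearIndependent ℝ (fun v : b => V xs (σ v)) := by rw [hWxs]; exact hbLI
  -- continuity of the family
  have hVcont : ∀ i, Continuous fun x => V x i := by
    intro i
    refine continuous_pi fun k => ?_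
    have h1 : Continuous (fderiv ℝ (c i)) :=
      ((hc i).fderiv_right (m := 1) (by norm_num)).continuous
    exact h1.clm_apply continuous_const
  have hWcont : Continuous fun x => (fun v : b => V x (σ v)) :=
    continuous_pi fun v => hVcont (σ v)
  have hopen : IsOpen {f : b → (Fin n → ℝ) | LinearIndependent ℝ f} :=
    isOpen_setOf_linearIndependent
  have evLI : ∀ᶠ x in nhds xs, LinearIndependent ℝ (fun v : b => V x (σ v)) := by
    have hmem : (fun v : b => V xs (σ v)) ∈ {f : b → (Fin n → ℝ) | LinearIndependent ℝ f} :=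
      hLIxs
    exact hWcont.continuousAt.eventually_mem (hopen.mem_nhds hmem)
  -- the cardinality bookkeeping
  have hrangeW : Set.range (fun v : b => V xs (σ v)) = b := by
    rw [hWxs, Subtype.range_coe]
  have hfr : ∀ {S T : Submodule ℝ (Fin n → ℝ)}, S = T → finrank ℝ S = finrank ℝ T :=
    fun h => by rw [h]
  have hcard : finrank ℝ (span ℝ (Set.range (V xs))) = Fintype.card b := by
    have h0 := finrank_span_eq_card hLIxs
    have h1 : span ℝ (Set.range fun v : b => V xs (σ v)) = span ℝ (Set.range (V xs)) := by
      rw [hrangeW, hbspan]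
    rw [← hfr h1]
    exact h0
  refine ⟨b, inferInstance, σ, hLIxs, ?_⟩
  filter_upwards [evLI, hconst] with x hLIx hrank
  intro i
  have hle : span ℝ (Set.range fun v : b => V x (σ v)) ≤ span ℝ (Set.range (V x)) := by
    refine span_mono ?_
    rintro _ ⟨v, rfl⟩
    exact ⟨σ v, rfl⟩
  have h1 : finrank ℝ (span ℝ (Set.range fun v : b => V x (σ v))) = Fintype.card b :=
    finrank_span_eq_card hLIx
  have h2 : finrank ℝ (span ℝ (Set.range (V x))) = Fintype.card b := by
    have : finrank ℝ (span ℝ (Set.range (V x)))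
        = finrank ℝ (span ℝ (Set.range (V xs))) := hrank
    rw [this, hcard]
  have heq : span ℝ (Set.range fun v : b => V x (σ v)) = span ℝ (Set.range (V x)) :=
    Submodule.eq_of_le_of_finrank_le hle (by rw [h1, h2])
  show V x i ∈ span ℝ (Set.range fun v : b => V x (σ v))
  rw [heq]
  exact subset_span ⟨i, rfl⟩


-- ===================== main theorem =====================

set_option maxHeartbeats 1000000 in
/-- Andreani–Martínez–Schuverdt: MFCQ plus constant rank of the Jacobian in a
neighborhood imply WSOC at a local minimizer. -/
theorem stmt7 {n m p : ℕ} (f : (Fin n → ℝ) → ℝ) (h : Fin m → (Fin n → ℝ) → ℝ)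
    (g : Fin p → (Fin n → ℝ) → ℝ)
    (hf : ContDiff ℝ 2 f) (hh : ∀ i, ContDiff ℝ 2 (h i)) (hg : ∀ j, ContDiff ℝ 2 (g j))
    (xs : Fin n → ℝ) (hfeas : Feas h g xs)
    (hmin : IsLocalMinOn f {x | Feas h g x} xs)
    (hmfcq : MFCQ h g xs)
    (hconst : ∀ᶠ x in nhds xs, (Jac h g xs x).rank = (Jac h g xs xs).rank) :
    ∃ (lam : Fin m → ℝ) (mu : Fin p → ℝ), IsLagMult f h g xs lam mu ∧
      ∀ d, critSub h g xs d → 0 ≤ hessQ (Lagr f h g lam mu) xs d := by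
  classical
  obtain ⟨hfeas_h, hfeas_g⟩ := hfeas
  obtain ⟨hLIh, d0, hd0h, hd0g⟩ := hmfcq
  set Df := fderiv ℝ f xs with hDfdef
  -- ============ STEP 1 : strict linearized directions have nonneg derivative ==========
  have step1 : ∀ d' : Fin n → ℝ, (∀ i, fderiv ℝ (h i) xs d' = 0) →
      (∀ j, g j xs = 0 → fderiv ℝ (g j) xs d' < 0) → 0 ≤ Df d' := by
    intro d' hd'h hd'g
    obtain ⟨γ, hγc, hγ0, hγd, hγev⟩ := curve_lemma h hh xs d' hLIh hd'h
    have hγtd : Filter.Tendsto γ (nhds 0) (nhds xs) := by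
      rw [← hγ0]; exact hγc.continuousAt.tendsto
    have hhz : ∀ᶠ t in nhds (0:ℝ), ∀ i, h i (γ t) = 0 := by
      filter_upwards [hγev] with t ht i
      rw [ht i, hfeas_h i]
    have hgz : ∀ j, ∀ᶠ t in nhdsWithin (0:ℝ) (Set.Ioi 0), g j (γ t) ≤ 0 := by
      intro j
      by_cases hact : g j xs = 0
      · have hchain : HasDerivAt (fun t => g j (γ t)) (fderiv ℝ (g j) xs d') 0 := by
          have hfd : HasFDerivAt (g j) (fderiv ℝ (g j) xs) (γ 0) := by
            rw [hγ0]; exact ((hg j).differentiable two_ne_zero xs).hasFDerivAt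
          exact hfd.comp_hasDerivAt 0 hγd
        have h0 : g j (γ 0) = 0 := by rw [hγ0, hact]
        have := eventually_neg_of_deriv_neg hchain (hd'g j hact) h0
        exact this.mono fun t ht => le_of_lt ht
      · have hlt : g j xs < 0 := lt_of_le_of_ne (hfeas_g j) hact
        have htd : Filter.Tendsto (fun t => g j (γ t)) (nhds 0) (nhds (g j xs)) :=
          ((hg j).continuous.tendsto xs).comp hγtd
        have := htd.eventually_lt_const hlt
        exact (this.mono fun t ht => le_of_lt ht).filter_mono nhdsWithin_le_nhds
    have hfeas_ev : ∀ᶠ t in nhdsWithin (0:ℝ) (Set.Ioi 0), γ t ∈ {x | Feas h g x} := by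
      have hall : ∀ᶠ t in nhdsWithin (0:ℝ) (Set.Ioi 0), ∀ j, g j (γ t) ≤ 0 :=
        Filter.eventually_all.2 hgz
      filter_upwards [hall, hhz.filter_mono nhdsWithin_le_nhds] with t h1 h2
      exact ⟨h2, h1⟩
    have htd2 : Filter.Tendsto γ (nhdsWithin (0:ℝ) (Set.Ioi 0))
        (nhdsWithin xs {x | Feas h g x}) := by
      rw [tendsto_nhdsWithin_iff]
      exact ⟨hγtd.mono_left nhdsWithin_le_nhds, hfeas_ev⟩
    have hminev : ∀ᶠ t in nhdsWithin (0:ℝ) (Set.Ioi 0), f xs ≤ f (γ t) :=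
      htd2.eventually hmin
    have hfd : HasDerivAt (fun t => f (γ t)) (Df d') 0 := by
      have : HasFDerivAt f Df (γ 0) := by
        rw [hγ0]; exact (hf.differentiable two_ne_zero xs).hasFDerivAt
      exact this.comp_hasDerivAt 0 hγd
    refine nonneg_deriv_of_right_min hfd ?_
    filter_upwards [hminev] with t ht
    rw [hγ0]
    exact ht
  -- ============ STEP 2 : closed linearized cone ==========
  have step2 : ∀ d' : Fin n → ℝ, (∀ i, fderiv ℝ (h i) xs d' = 0) →
      (∀ j, g j xs = 0 → fderiv ℝ (g j) xs d' ≤ 0) → 0 ≤ Df d' := by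
    intro d' h1 h2
    have hcont : Filter.Tendsto (fun ε : ℝ => Df d' + ε * Df d0)
        (nhdsWithin (0:ℝ) (Set.Ioi 0)) (nhds (Df d')) := by
      have hc : Continuous (fun ε : ℝ => Df d' + ε * Df d0) := by continuity
      have := (hc.tendsto 0).mono_left (nhdsWithin_le_nhds (s := Set.Ioi (0:ℝ)))
      simpa using this
    refine ge_of_tendsto hcont ?_
    filter_upwards [self_mem_nhdsWithin] with ε hε
    have hεpos : (0:ℝ) < ε := hε
    have := step1 (d' + ε • d0)
      (fun i => by rw [ContinuousLinearMap.map_add, ContinuousLinearMap.map_smul, h1 i, hd0h i]; simp)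
      (fun j hj => by
        rw [ContinuousLinearMap.map_add, ContinuousLinearMap.map_smul]
        have ha := h2 j hj
        have hb := hd0g j hj
        have : ε * fderiv ℝ (g j) xs d0 < 0 := mul_neg_of_pos_of_neg hεpos hb
        simp only [smul_eq_mul]
        linarith)
    rwa [ContinuousLinearMap.map_add, ContinuousLinearMap.map_smul, smul_eq_mul] at this
  -- ============ Farkas: construction of the multipliers ==========
  set w : (Fin m ⊕ Fin m ⊕ Fin p) → Module.Dual ℝ (Fin n → ℝ) :=
    Sum.elim (fun i => -((fderiv ℝ (h i) xs : (Fin n → ℝ) →ₗ[ℝ] ℝ)))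
      (Sum.elim (fun i => ((fderiv ℝ (h i) xs : (Fin n → ℝ) →ₗ[ℝ] ℝ)))
        (fun j => if g j xs = 0 then -((fderiv ℝ (g j) xs : (Fin n → ℝ) →ₗ[ℝ] ℝ)) else 0))
    with hwdef
  have hcond : ∀ v, (∀ idx, 0 ≤ w idx v) → 0 ≤ (Df : (Fin n → ℝ) →ₗ[ℝ] ℝ) v := by
    intro v hv
    have hvh : ∀ i, fderiv ℝ (h i) xs v = 0 := by
      intro i
      have h1 := hv (Sum.inl i)
      have h2 := hv (Sum.inr (Sum.inl i))
      simp only [hwdef, Sum.elim_inl, Sum.elim_inr, LinearMap.neg_apply,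
        ContinuousLinearMap.coe_coe] at h1 h2
      linarith
    have hvg : ∀ j, g j xs = 0 → fderiv ℝ (g j) xs v ≤ 0 := by
      intro j hj
      have h1 := hv (Sum.inr (Sum.inr j))
      simp only [hwdef, Sum.elim_inl, Sum.elim_inr, if_pos hj, LinearMap.neg_apply,
        ContinuousLinearMap.coe_coe] at h1
      linarith
    exact step2 v hvh hvg
  obtain ⟨μF, hμF0, hμF⟩ := farkas' w (Df : (Fin n → ℝ) →ₗ[ℝ] ℝ) hcond
  set lam : Fin m → ℝ := fun i => μF (Sum.inl i) - μF (Sum.inr (Sum.inl i)) with hlamdef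
  set mu : Fin p → ℝ := fun j => if g j xs = 0 then μF (Sum.inr (Sum.inr j)) else 0 with hmudef
  have hmu0 : ∀ j, 0 ≤ mu j := by
    intro j
    simp only [hmudef]
    by_cases hj : g j xs = 0
    · rw [if_pos hj]; exact hμF0 _
    · rw [if_neg hj]
  have hcompl : ∀ j, mu j * g j xs = 0 := by
    intro j
    by_cases hj : g j xs = 0
    · rw [hj, mul_zero]
    · simp only [hmudef]; simp [if_neg hj]
  -- derivative of the Lagrangian
  have hsum_h : HasFDerivAt (fun x => ∑ i, lam i * h i x)
      (∑ i, lam i • fderiv ℝ (h i) xs) xs :=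
    HasFDerivAt.fun_sum (fun i _ => (((hh i).differentiable two_ne_zero xs).hasFDerivAt).const_mul
      (lam i))
  have hsum_g : HasFDerivAt (fun x => ∑ j, mu j * g j x)
      (∑ j, mu j • fderiv ℝ (g j) xs) xs :=
    HasFDerivAt.fun_sum (fun j _ => (((hg j).differentiable two_ne_zero xs).hasFDerivAt).const_mul
      (mu j))
  have hLagfd : HasFDerivAt (Lagr f h g lam mu)
      (Df + ∑ i, lam i • fderiv ℝ (h i) xs + ∑ j, mu j • fderiv ℝ (g j) xs) xs :=
    (((hf.differentiable two_ne_zero xs).hasFDerivAt).add hsum_h).add hsum_g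
  have hDtot0 : Df + (∑ i, lam i • fderiv ℝ (h i) xs) + (∑ j, mu j • fderiv ℝ (g j) xs)
      = (0 : (Fin n → ℝ) →L[ℝ] ℝ) := by
    refine ContinuousLinearMap.ext fun v => ?_
    have key := LinearMap.congr_fun hμF v
    rw [LinearMap.coe_sum] at key
    simp only [Finset.sum_apply, LinearMap.smul_apply, smul_eq_mul,
      Fintype.sum_sum_type, ContinuousLinearMap.coe_coe] at key
    -- key : Df v = ∑ (inl) + (∑ (inr inl) + ∑ (inr inr))
    have e1 : ∀ i : Fin m, μF (Sum.inl i) * (w (Sum.inl i)) v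
        = -(μF (Sum.inl i) * fderiv ℝ (h i) xs v) := by
      intro i; simp [hwdef]
    have e2 : ∀ i : Fin m, μF (Sum.inr (Sum.inl i)) * (w (Sum.inr (Sum.inl i))) v
        = μF (Sum.inr (Sum.inl i)) * fderiv ℝ (h i) xs v := by
      intro i; simp [hwdef]
    have e3 : ∀ j : Fin p, μF (Sum.inr (Sum.inr j)) * (w (Sum.inr (Sum.inr j))) v
        = -(mu j * fderiv ℝ (g j) xs v) := by
      intro j
      by_cases hj : g j xs = 0
      · simp [hwdef, hmudef, if_pos hj]
      · simp [hwdef, hmudef, if_neg hj]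
    rw [Finset.sum_congr rfl (fun i _ => e1 i), Finset.sum_congr rfl (fun i _ => e2 i),
      Finset.sum_congr rfl (fun j _ => e3 j)] at key
    simp only [ContinuousLinearMap.add_apply, ContinuousLinearMap.coe_sum',
      Finset.sum_apply, ContinuousLinearMap.coe_smul', Pi.smul_apply, smul_eq_mul,
      ContinuousLinearMap.zero_apply]
    rw [Finset.sum_neg_distrib] at key
    have hlam : ∀ i, lam i * fderiv ℝ (h i) xs v
        = μF (Sum.inl i) * fderiv ℝ (h i) xs v
          - μF (Sum.inr (Sum.inl i)) * fderiv ℝ (h i) xs v := by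
      intro i; simp only [hlamdef]; ring
    rw [Finset.sum_congr rfl (fun i _ => hlam i), Finset.sum_sub_distrib]
    rw [Finset.sum_neg_distrib] at key
    linarith [key]
  have hstat : fderiv ℝ (Lagr f h g lam mu) xs = 0 := by
    rw [hLagfd.fderiv]
    exact hDtot0
  have hψc : ContDiff ℝ 2 (Lagr f h g lam mu) := by
    refine ContDiff.add (ContDiff.add hf ?_) ?_
    · exact ContDiff.sum fun i _ => contDiff_const.mul (hh i)
    · exact ContDiff.sum fun j _ => contDiff_const.mul (hg j)
  refine ⟨lam, mu, ⟨hmu0, hstat, hcompl⟩, ?_⟩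
  -- ============ WSOC part ==========
  set ι := (Fin m ⊕ {j : Fin p // g j xs = 0}) with hιdef
  set cns : ι → (Fin n → ℝ) → ℝ := Sum.elim h (fun j => g j.1) with hcnsdef
  have hcns : ∀ i, ContDiff ℝ 2 (cns i) := by
    rintro (i | j)
    · exact hh i
    · exact hg j.1
  have hJrank : ∀ x : Fin n → ℝ, (Jac h g xs x).rank
      = Module.finrank ℝ (Submodule.span ℝ (Set.range fun i => gradVec (cns i) x)) := by
    intro x
    have hfn : (Jac h g xs x : (Fin m ⊕ {j : Fin p // g j xs = 0}) → (Fin n → ℝ))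
        = fun i => gradVec (cns i) x := by
      funext i k
      rcases i with i | j <;> rfl
    rw [Matrix.rank_eq_finrank_span_row, hfn]
    rfl
  have hconst' : ∀ᶠ x in nhds xs,
      Module.finrank ℝ (Submodule.span ℝ (Set.range fun i => gradVec (cns i) x))
        = Module.finrank ℝ (Submodule.span ℝ (Set.range fun i => gradVec (cns i) xs)) := by
    filter_upwards [hconst] with x hx
    rw [← hJrank x, ← hJrank xs]
    exact hx
  obtain ⟨κ, instκ, σ, hLIb, hspanb⟩ := basis_rows cns hcns xs hconst'
  intro d hd
  -- derivatives of all constraints vanish at d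
  have hdc : ∀ i, fderiv ℝ (cns i) xs d = 0 := by
    rintro (i | j)
    · exact hd.1 i
    · exact hd.2 j.1 j.2
  -- linear independence of the selected functionals
  have hLIfun : LinearIndependent ℝ (fun b : κ => fderiv ℝ (cns (σ b)) xs) := by
    refine LinearIndependent.of_comp (coordCLM n) ?_
    exact hLIb
  obtain ⟨γ, hγc, hγ0, hγd, hγev⟩ := curve_lemma (fun b : κ => cns (σ b))
    (fun b => hcns (σ b)) xs d hLIfun (fun b => hdc (σ b))
  -- all constraints are conserved along γ
  have hcons : ∀ᶠ t in nhds (0:ℝ), ∀ i : ι, cns i (γ t) = cns i xs := by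
    rw [Filter.eventually_all]
    intro i
    refine conserve_lemma (fun b => hcns (σ b)) (hcns i) hγc hγ0 hγev ?_
    filter_upwards [hspanb] with x hx
    exact hx i
  have hγtd : Filter.Tendsto γ (nhds 0) (nhds xs) := by
    rw [← hγ0]; exact hγc.continuousAt.tendsto
  -- feasibility along γ
  have hfeasγ : ∀ᶠ t in nhds (0:ℝ), γ t ∈ {x | Feas h g x} := by
    have hgev : ∀ j : Fin p, ∀ᶠ t in nhds (0:ℝ), g j (γ t) ≤ 0 := by
      intro j
      by_cases hj : g j xs = 0
      · filter_upwards [hcons] with t ht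
        have := ht (Sum.inr ⟨j, hj⟩)
        simp only [hcnsdef, Sum.elim_inr] at this
        rw [this, hj]
      · have hlt : g j xs < 0 := lt_of_le_of_ne (hfeas_g j) hj
        have htd : Filter.Tendsto (fun t => g j (γ t)) (nhds 0) (nhds (g j xs)) :=
          ((hg j).continuous.tendsto xs).comp hγtd
        exact (htd.eventually_lt_const hlt).mono fun t ht => le_of_lt ht
    filter_upwards [hcons, Filter.eventually_all.2 hgev] with t ht hgt
    refine ⟨fun i => ?_, hgt⟩
    have := ht (Sum.inl i)
    simp only [hcnsdef, Sum.elim_inl] at this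
    rw [this, hfeas_h i]
  -- f ∘ γ has a local minimum at 0
  have hminf : ∀ᶠ t in nhds (0:ℝ), f xs ≤ f (γ t) := by
    have htd2 : Filter.Tendsto γ (nhds (0:ℝ)) (nhdsWithin xs {x | Feas h g x}) := by
      rw [tendsto_nhdsWithin_iff]
      exact ⟨hγtd, hfeasγ⟩
    exact htd2.eventually hmin
  -- the Lagrangian agrees with f along γ
  set ψ := Lagr f h g lam mu with hψdef
  have hψxs : ψ xs = f xs := by
    rw [hψdef, Lagr]
    have h1 : ∑ i, lam i * h i xs = 0 := by
      refine Finset.sum_eq_zero fun i _ => ?_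
      rw [hfeas_h i, mul_zero]
    have h2 : ∑ j, mu j * g j xs = 0 := Finset.sum_eq_zero fun j _ => hcompl j
    rw [h1, h2, add_zero, add_zero]
  have hψγ : ∀ᶠ t in nhds (0:ℝ), ψ (γ t) = f (γ t) := by
    filter_upwards [hcons] with t ht
    rw [hψdef, Lagr]
    have h1 : ∑ i, lam i * h i (γ t) = 0 := by
      refine Finset.sum_eq_zero fun i _ => ?_
      have := ht (Sum.inl i)
      simp only [hcnsdef, Sum.elim_inl] at this
      rw [this, hfeas_h i, mul_zero]
    have h2 : ∑ j, mu j * g j (γ t) = 0 := by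
      refine Finset.sum_eq_zero fun j _ => ?_
      by_cases hj : g j xs = 0
      · have := ht (Sum.inr ⟨j, hj⟩)
        simp only [hcnsdef, Sum.elim_inr] at this
        rw [this, hj, mul_zero]
      · simp only [hmudef]
        simp [if_neg hj]
    rw [h1, h2, add_zero, add_zero]
  have hminψ : IsLocalMin (fun t => ψ (γ t)) 0 := by
    show ∀ᶠ t in nhds (0:ℝ), ψ (γ 0) ≤ ψ (γ t)
    filter_upwards [hminf, hψγ] with t h1 h2
    rw [hγ0, hψxs, h2]
    exact h1
  -- second derivative computations
  have hψdiff : Differentiable ℝ ψ := hψc.differentiable two_ne_zero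
  have ev_d : ∀ᶠ t in nhds (0:ℝ), DifferentiableAt ℝ γ t :=
    (hγc.eventually (by norm_num)).mono fun t ht => ht.differentiableAt two_ne_zero
  have ev_comp : ∀ᶠ t in nhds (0:ℝ), DifferentiableAt ℝ (fun u => ψ (γ u)) t :=
    ev_d.mono fun t ht => (hψdiff (γ t)).comp t ht
  have e_deriv : ∀ᶠ t in nhds (0:ℝ),
      deriv (fun u => ψ (γ u)) t = fderiv ℝ ψ (γ t) (deriv γ t) :=
    ev_d.mono fun t ht =>
      (((hψdiff (γ t)).hasFDerivAt).comp_hasDerivAt t ht.hasDerivAt).deriv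
  have hfd2 : DifferentiableAt ℝ (fderiv ℝ ψ) xs :=
    ((hψc.fderiv_right (m := 1) (by norm_num)).differentiable one_ne_zero).differentiableAt
  have hc' : HasDerivAt (fun t => fderiv ℝ ψ (γ t)) (fderiv ℝ (fderiv ℝ ψ) xs d) 0 := by
    have : HasFDerivAt (fderiv ℝ ψ) (fderiv ℝ (fderiv ℝ ψ) xs) (γ 0) := by
      rw [hγ0]; exact hfd2.hasFDerivAt
    exact this.comp_hasDerivAt 0 hγd
  have hu : HasDerivAt (fun t => deriv γ t) (deriv (fun t => deriv γ t) 0) 0 := by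
    have hγfd : ContDiffAt ℝ 1 (fderiv ℝ γ) 0 := hγc.fderiv_right (m := 1) (by norm_num)
    have h1 : DifferentiableAt ℝ (fderiv ℝ γ) 0 := hγfd.differentiableAt one_ne_zero
    have h2 : DifferentiableAt ℝ (fun t => fderiv ℝ γ t 1) 0 :=
      h1.clm_apply (differentiableAt_const 1)
    have hde : (fun t => deriv γ t) = fun t => fderiv ℝ γ t 1 :=
      funext fun t => (fderiv_apply_one_eq_deriv).symm
    rw [hde]
    exact h2.hasDerivAt
  have happly : HasDerivAt (fun t => fderiv ℝ ψ (γ t) (deriv γ t))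
      ((fderiv ℝ (fderiv ℝ ψ) xs d) (deriv γ 0)
        + (fderiv ℝ ψ (γ 0)) (deriv (fun t => deriv γ t) 0)) 0 :=
    hc'.clm_apply hu
  have hW : (fderiv ℝ (fderiv ℝ ψ) xs d) (deriv γ 0)
      + (fderiv ℝ ψ (γ 0)) (deriv (fun t => deriv γ t) 0)
      = (fderiv ℝ (fderiv ℝ ψ) xs d) d := by
    rw [hγd.deriv, hγ0, hstat]
    simp
  have h2' : HasDerivAt (deriv (fun u => ψ (γ u))) ((fderiv ℝ (fderiv ℝ ψ) xs d) d) 0 := by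
    rw [← hW]
    exact happly.congr_of_eventuallyEq e_deriv
  have h1' : deriv (fun u => ψ (γ u)) 0 = 0 := by
    have := e_deriv.self_of_nhds
    rw [this, hγ0, hstat]
    simp
  have hfinal := second_deriv_test hminψ ev_comp h1' h2'
  rw [hessQ, iteratedFDeriv_two_apply]
  simpa using hfinal


end
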